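/- Let T be a metric tree, η : [0,1] → T a geodesic, and β : [0,1] → T a continuous path with the same endpoints as η. Then for any 1-Lipschitz map φ : T → M into a metric space M, length(φ ∘ η) ≤ length(φ ∘ β). -/

import Mathlib

open Set

/-- `A` is an arc in `T` from `x` to `y`: the image of an injective continuous map
on `[0,1]` with endpoints `x` and `y`. -/
def IsArcIn {T : Type*} [TopologicalSpace T] (A : Set T) (x y : T) : Prop :=
  ∃ f : ℝ → T, ContinuousOn f (Icc 0 1) ∧ InjOn f (Icc 0 1) ∧
    f 0 = x ∧ f 1 = y ∧ f '' (Icc 0 1) = A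

/-- `g : [0,1] → T` is a geodesic: `d(g s, g t) = d(g 0, g 1)·|s - t|`. -/
def IsGeodesicPath {T : Type*} [PseudoMetricSpace T] (g : ℝ → T) : Prop :=
  ∀ s ∈ Icc (0:ℝ) 1, ∀ t ∈ Icc (0:ℝ) 1,
    dist (g s) (g t) = dist (g 0) (g 1) * |s - t|

/-- A metric tree: any two points are joined by a geodesic, and any two distinct points
are joined by a unique arc. -/
structure IsMetricTree (T : Type*) [MetricSpace T] : Prop where
  exists_geodesic : ∀ x y : T, ∃ g : ℝ → T, g 0 = x ∧ g 1 = y ∧ IsGeodesicPath g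
  unique_arc : ∀ x y : T, x ≠ y → ∀ A B : Set T,
    IsArcIn A x y → IsArcIn B x y → A = B

/-- Length of a path on `[0,1]`. -/
noncomputable def pathLen {M : Type*} [PseudoEMetricSpace M] (η : ℝ → M) : ENNReal :=
  eVariationOn η (Set.Icc 0 1)

section Aux
variable {T : Type*} [MetricSpace T]


lemma mem01_0 : (0:ℝ) ∈ Icc (0:ℝ) 1 := ⟨le_refl 0, zero_le_one⟩
lemma mem01_1 : (1:ℝ) ∈ Icc (0:ℝ) 1 := ⟨zero_le_one, le_refl 1⟩

lemma geo_continuousOn {g : ℝ → T} (hg : IsGeodesicPath g) : ContinuousOn g (Icc 0 1) := by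
  have : LipschitzOnWith (Real.toNNReal (dist (g 0) (g 1))) g (Icc 0 1) := by
    rw [lipschitzOnWith_iff_dist_le_mul]
    intro s hs t ht
    rw [hg s hs t ht, Real.coe_toNNReal _ dist_nonneg, Real.dist_eq]
  exact this.continuousOn

lemma geo_injOn {g : ℝ → T} (hg : IsGeodesicPath g) (hne : g 0 ≠ g 1) :
    InjOn g (Icc 0 1) := by
  intro s hs t ht h
  have := hg s hs t ht
  rw [h, dist_self] at this
  have hD : 0 < dist (g 0) (g 1) := dist_pos.2 hne
  have : |s - t| = 0 := by
    rcases mul_eq_zero.1 this.symm with h' | h'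
    · exact absurd h' hD.ne'
    · exact h'
  linarith [abs_eq_zero.1 this, sub_eq_zero.1 (abs_eq_zero.1 this)]

lemma geo_const {g : ℝ → T} (hg : IsGeodesicPath g) (heq : g 0 = g 1) :
    ∀ t ∈ Icc (0:ℝ) 1, g t = g 0 := by
  intro t ht
  have h2 : dist (g 0) (g 1) = 0 := by rw [heq, dist_self]
  have := hg t ht 0 mem01_0
  rw [h2, zero_mul] at this
  exact dist_eq_zero.1 this

lemma geo_dist_le {g : ℝ → T} (hg : IsGeodesicPath g) {t : ℝ} (ht : t ∈ Icc (0:ℝ) 1) :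
    dist (g t) (g 0) ≤ dist (g 0) (g 1) := by
  rw [hg t ht 0 mem01_0]
  have : |t - 0| ≤ 1 := by rw [sub_zero, abs_of_nonneg ht.1]; exact ht.2
  calc dist (g 0) (g 1) * |t - 0| ≤ dist (g 0) (g 1) * 1 :=
        mul_le_mul_of_nonneg_left this dist_nonneg
    _ = _ := mul_one _

lemma geo_isArcIn {g : ℝ → T} (hg : IsGeodesicPath g) (hne : g 0 ≠ g 1) :
    IsArcIn (g '' Icc 0 1) (g 0) (g 1) :=
  ⟨g, geo_continuousOn hg, geo_injOn hg hne, rfl, rfl, rfl⟩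

lemma geo_const_image {g : ℝ → T} (hg : IsGeodesicPath g) (heq : g 0 = g 1) :
    g '' Icc 0 1 = {g 0} := by
  apply Subset.antisymm
  · rintro _ ⟨t, ht, rfl⟩
    exact geo_const hg heq t ht
  · rintro _ rfl
    exact ⟨0, mem01_0, rfl⟩

lemma geo_image_eq (hT : IsMetricTree T) {g g' : ℝ → T} (hg : IsGeodesicPath g)
    (hg' : IsGeodesicPath g') (h0 : g 0 = g' 0) (h1 : g 1 = g' 1) :
    g '' Icc 0 1 = g' '' Icc 0 1 := by
  by_cases hne : g 0 = g 1
  · rw [geo_const_image hg hne, geo_const_image hg' (by rw [← h0, ← h1]; exact hne), h0]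
  · exact hT.unique_arc (g 0) (g 1) hne _ _ (geo_isArcIn hg hne)
      (by rw [h0, h1]; exact geo_isArcIn hg' (by rw [← h0, ← h1]; exact hne))

lemma sub_geodesic {g : ℝ → T} (hg : IsGeodesicPath g) {a b : ℝ}
    (ha : a ∈ Icc (0:ℝ) 1) (hb : b ∈ Icc (0:ℝ) 1) :
    ∃ h : ℝ → T, IsGeodesicPath h ∧ h 0 = g a ∧ h 1 = g b ∧
      h '' Icc 0 1 ⊆ g '' Icc 0 1 ∧ ∀ c, a ≤ c → c ≤ b → g c ∈ h '' Icc 0 1 := by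
  obtain ⟨ha0, ha1⟩ := ha; obtain ⟨hb0, hb1⟩ := hb
  refine ⟨fun r => g (a + r * (b - a)), ?_, by norm_num, by norm_num, ?_, ?_⟩
  · have hmem : ∀ r ∈ Icc (0:ℝ) 1, a + r * (b - a) ∈ Icc (0:ℝ) 1 := by
      intro r hr
      constructor <;> nlinarith [hr.1, hr.2]
    intro s hs t ht
    simp only
    rw [hg _ (hmem s hs) _ (hmem t ht), hg _ (hmem 0 mem01_0) _ (hmem 1 mem01_1)]
    have e1 : (a + s * (b - a)) - (a + t * (b - a)) = (s - t) * (b - a) := by ring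
    have e2 : (a + 0 * (b - a)) - (a + 1 * (b - a)) = -(b - a) := by ring
    rw [e1, e2, abs_mul, abs_neg]
    ring
  · rintro _ ⟨r, hr, rfl⟩
    have : a + r * (b - a) ∈ Icc (0:ℝ) 1 := by
      constructor <;> nlinarith [hr.1, hr.2]
    exact mem_image_of_mem g this
  · intro c hac hcb
    by_cases hab : a = b
    · have : c = a := le_antisymm (hab ▸ hcb) hac
      exact ⟨0, mem01_0, by rw [this]; norm_num⟩
    · have hab' : a < b := lt_of_le_of_ne (hac.trans hcb) hab
      refine ⟨(c - a) / (b - a), ⟨div_nonneg (by linarith) (by linarith), ?_⟩, ?_⟩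
      · rw [div_le_one (by linarith)]; linarith
      · simp only
        rw [div_mul_cancel₀ _ (by linarith : b - a ≠ 0)]
        norm_num

lemma seg_subset_union (hT : IsMetricTree T) {g g1 g2 : ℝ → T}
    (hg : IsGeodesicPath g) (hg1 : IsGeodesicPath g1) (hg2 : IsGeodesicPath g2)
    (e1 : g 0 = g1 0) (e2 : g1 1 = g2 0) (e3 : g2 1 = g 1) :
    g '' Icc 0 1 ⊆ g1 '' Icc 0 1 ∪ g2 '' Icc 0 1 := by
  by_cases hxz : g 0 = g 1
  · rw [geo_const_image hg hxz, e1]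
    exact singleton_subset_iff.2 (Or.inl (mem_image_of_mem g1 mem01_0))
  by_cases hxy : g1 0 = g1 1
  · -- g2 is a geodesic from g 0 to g 1
    have : g '' Icc 0 1 = g2 '' Icc 0 1 :=
      geo_image_eq hT hg hg2 (by rw [e1, hxy, e2]) e3.symm
    rw [this]; exact subset_union_right
  by_cases hyz : g2 0 = g2 1
  · have : g '' Icc 0 1 = g1 '' Icc 0 1 :=
      geo_image_eq hT hg hg1 e1 (by rw [← e3, ← hyz, e2])
    rw [this]; exact subset_union_left
  -- main case
  set K2 := g2 '' Icc 0 1 with hK2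
  have hK2c : IsClosed K2 := (isCompact_Icc.image_of_continuousOn (geo_continuousOn hg2)).isClosed
  set S : Set ℝ := Icc 0 1 ∩ g1 ⁻¹' K2 with hS
  have hScl : IsClosed S :=
    (geo_continuousOn hg1).preimage_isClosed_of_isClosed isClosed_Icc hK2c
  have hSne : S.Nonempty := ⟨1, mem01_1, by
    show g1 1 ∈ K2; rw [e2]; exact mem_image_of_mem g2 mem01_0⟩
  have hSbdd : BddBelow S := ⟨0, fun s hs => hs.1.1⟩
  set t₀ := sInf S with ht₀def
  have ht₀S : t₀ ∈ S := hScl.csInf_mem hSne hSbdd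
  have ht₀ : t₀ ∈ Icc (0:ℝ) 1 := ht₀S.1
  obtain ⟨s₀, hs₀, hws : g2 s₀ = g1 t₀⟩ := ht₀S.2
  by_cases hwx : g1 t₀ = g 0
  · -- tail of g2 is a geodesic from g 0 to g 1
    obtain ⟨h, hh, hh0, hh1, hhsub, -⟩ := sub_geodesic hg2 hs₀ mem01_1
    have : g '' Icc 0 1 = h '' Icc 0 1 :=
      geo_image_eq hT hg hh (by rw [hh0, hws, hwx]) (by rw [hh1, e3])
    rw [this]; exact hhsub.trans subset_union_right
  by_cases hwz : g1 t₀ = g 1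
  · obtain ⟨h, hh, hh0, hh1, hhsub, -⟩ := sub_geodesic hg1 mem01_0 ht₀
    have : g '' Icc 0 1 = h '' Icc 0 1 :=
      geo_image_eq hT hg hh (by rw [hh0, e1]) (by rw [hh1, hwz])
    rw [this]; exact hhsub.trans subset_union_left
  -- now build the concatenated arc
  have ht₀pos : 0 < t₀ := by
    rcases lt_or_eq_of_le ht₀.1 with h | h
    · exact h
    · exact absurd (by rw [← h]; exact e1.symm) hwx
  have hs₀lt : s₀ < 1 := by
    rcases lt_or_eq_of_le hs₀.2 with h | h
    · exact h
    · exfalso; apply hwz; rw [← hws, h, e3]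
  set cl : ℝ → ℝ := fun r => min 1 (max 0 r) with hcl
  have hclcont : Continuous cl := continuous_const.min (continuous_const.max continuous_id)
  have hclmem : ∀ r, cl r ∈ Icc (0:ℝ) 1 :=
    fun r => ⟨le_min zero_le_one (le_max_left 0 r), min_le_left 1 _⟩
  have hclid : ∀ r ∈ Icc (0:ℝ) 1, cl r = r := by
    intro r hr; simp only [hcl]; rw [max_eq_right hr.1, min_eq_right hr.2]
  set G1 : ℝ → T := g1 ∘ cl with hG1
  set G2 : ℝ → T := g2 ∘ cl with hG2
  have hG1cont : Continuous G1 := (geo_continuousOn hg1).comp_continuous hclcont hclmem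
  have hG2cont : Continuous G2 := (geo_continuousOn hg2).comp_continuous hclcont hclmem
  have hG1eq : ∀ r ∈ Icc (0:ℝ) 1, G1 r = g1 r := by
    intro r hr; simp only [hG1, Function.comp_apply, hclid r hr]
  have hG2eq : ∀ r ∈ Icc (0:ℝ) 1, G2 r = g2 r := by
    intro r hr; simp only [hG2, Function.comp_apply, hclid r hr]
  set F : ℝ → T := fun r => if r ≤ 1/2 then G1 (2*r*t₀) else G2 (s₀ + (2*r-1)*(1-s₀)) with hF
  have harg1 : ∀ r, 0 ≤ r → r ≤ 1/2 → 2*r*t₀ ∈ Icc (0:ℝ) 1 := by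
    intro r h0r hr2
    constructor
    · positivity
    · nlinarith [ht₀.2]
  have harg2 : ∀ r, 1/2 ≤ r → r ≤ 1 → s₀ + (2*r-1)*(1-s₀) ∈ Icc (0:ℝ) 1 := by
    intro r hr2 hr1
    constructor <;> nlinarith [hs₀.1, hs₀.2]
  have c1 : Continuous fun r : ℝ => G1 (2 * r * t₀) := hG1cont.comp (by fun_prop)
  have c2 : Continuous fun r : ℝ => G2 (s₀ + (2 * r - 1) * (1 - s₀)) := hG2cont.comp (by fun_prop)
  have hFcont : Continuous F := by
    apply Continuous.if_le c1 c2 continuous_id continuous_const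
    intro r hr
    rw [show r = 1/2 from hr]
    have h1 : (2*(1/2:ℝ)*t₀) = t₀ := by ring
    have h2 : (s₀ + (2*(1/2:ℝ)-1)*(1-s₀)) = s₀ := by ring
    rw [h1, h2, hG1eq _ ht₀, hG2eq _ hs₀, ← hws]
  have hF1val : ∀ r, 0 ≤ r → r ≤ 1/2 → F r = g1 (2*r*t₀) := by
    intro r h0 h2
    simp only [hF, if_pos h2]
    exact hG1eq _ (harg1 r h0 h2)
  have hF2val : ∀ r, 1/2 < r → r ≤ 1 → F r = g2 (s₀ + (2*r-1)*(1-s₀)) := by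
    intro r h2 h1
    simp only [hF, if_neg (not_le.2 h2)]
    exact hG2eq _ (harg2 r h2.le h1)
  -- injectivity
  have hinj1 := geo_injOn hg1 hxy
  have hinj2 := geo_injOn hg2 hyz
  have hmin : ∀ r, 0 ≤ r → r ≤ 1/2 → g1 (2*r*t₀) ∈ K2 → r = 1/2 := by
    intro r h0 h2 hmem
    have : 2*r*t₀ ∈ S := ⟨harg1 r h0 h2, hmem⟩
    have h1 : t₀ ≤ 2*r*t₀ := csInf_le hSbdd this
    have h2' : 2*r*t₀ ≤ t₀ := by nlinarith
    have : 2*r*t₀ = t₀ := le_antisymm h2' h1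
    nlinarith
  have hFinj : InjOn F (Icc 0 1) := by
    intro r hr r' hr' heq
    rcases le_or_gt r (1/2) with h1 | h1 <;> rcases le_or_gt r' (1/2) with h2 | h2
    · rw [hF1val r hr.1 h1, hF1val r' hr'.1 h2] at heq
      have := hinj1 (harg1 r hr.1 h1) (harg1 r' hr'.1 h2) heq
      nlinarith
    · -- r ≤ 1/2 < r'
      rw [hF1val r hr.1 h1, hF2val r' h2 hr'.2] at heq
      have hmem : g1 (2*r*t₀) ∈ K2 := by
        rw [heq]; exact mem_image_of_mem g2 (harg2 r' h2.le hr'.2)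
      have hr12 : r = 1/2 := hmin r hr.1 h1 hmem
      exfalso
      have e : (2*r*t₀) = t₀ := by rw [hr12]; ring
      rw [e, ← hws] at heq
      have := hinj2 hs₀ (harg2 r' h2.le hr'.2) heq
      nlinarith
    · rw [hF2val r h1 hr.2, hF1val r' hr'.1 h2] at heq
      have hmem : g1 (2*r'*t₀) ∈ K2 := by
        rw [← heq]; exact mem_image_of_mem g2 (harg2 r h1.le hr.2)
      have hr12 : r' = 1/2 := hmin r' hr'.1 h2 hmem
      exfalso
      have e : (2*r'*t₀) = t₀ := by rw [hr12]; ring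
      rw [e, ← hws] at heq
      have := hinj2 (harg2 r h1.le hr.2) hs₀ heq
      nlinarith
    · rw [hF2val r h1 hr.2, hF2val r' h2 hr'.2] at heq
      have := hinj2 (harg2 r h1.le hr.2) (harg2 r' h2.le hr'.2) heq
      nlinarith
  have hF0 : F 0 = g 0 := by
    rw [hF1val 0 le_rfl (by norm_num)]
    rw [show (2*(0:ℝ)*t₀) = 0 by ring, ← e1]
  have hF1 : F 1 = g 1 := by
    rw [hF2val 1 (by norm_num) le_rfl]
    rw [show (s₀ + (2*(1:ℝ)-1)*(1-s₀)) = 1 by ring, e3]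
  have hFarc : IsArcIn (F '' Icc 0 1) (g 0) (g 1) :=
    ⟨F, hFcont.continuousOn, hFinj, hF0, hF1, rfl⟩
  have himg : g '' Icc 0 1 = F '' Icc 0 1 :=
    hT.unique_arc (g 0) (g 1) hxz _ _ (geo_isArcIn hg hxz) hFarc
  rw [himg]
  rintro _ ⟨r, hr, rfl⟩
  rcases le_or_gt r (1/2) with h1 | h1
  · rw [hF1val r hr.1 h1]
    exact Or.inl (mem_image_of_mem g1 (harg1 r hr.1 h1))
  · rw [hF2val r h1 hr.2]
    exact Or.inr (mem_image_of_mem g2 (harg2 r h1.le hr.2))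

lemma mem_of_path (hT : IsMetricTree T) {g : ℝ → T} (hg : IsGeodesicPath g)
    {γ : ℝ → T} {a b : ℝ} (hab : a ≤ b) (hγ : ContinuousOn γ (Icc a b))
    (hγa : γ a = g 0) (hγb : γ b = g 1) :
    g '' Icc 0 1 ⊆ γ '' Icc a b := by
  intro p hp
  by_contra hpK
  set K := γ '' Icc a b with hK
  have hKcomp : IsCompact K := isCompact_Icc.image_of_continuousOn hγ
  have hKne : K.Nonempty := ⟨γ a, mem_image_of_mem γ ⟨le_rfl, hab⟩⟩
  have hε : 0 < Metric.infDist p K := (hKcomp.isClosed.notMem_iff_infDist_pos hKne).1 hpK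
  set ε := Metric.infDist p K with hεdef
  obtain ⟨δ, hδpos, hδ⟩ := Metric.uniformContinuousOn_iff.1
    (isCompact_Icc.uniformContinuousOn_of_continuous hγ) ε hε
  obtain ⟨n, hn⟩ := exists_nat_gt ((b - a)/δ)
  have hnpos : 0 < (n:ℝ) := lt_of_le_of_lt (div_nonneg (by linarith) hδpos.le) hn
  set sp : ℕ → ℝ := fun i => a + i * (b - a) / n with hsp
  have hspmem : ∀ i ≤ n, sp i ∈ Icc a b := by
    intro i hi
    have hi' : (i:ℝ) ≤ n := Nat.cast_le.2 hi
    have h1 : 0 ≤ (i:ℝ) * (b - a) / n := div_nonneg (mul_nonneg i.cast_nonneg (by linarith)) hnpos.le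
    have h2 : (i:ℝ) * (b - a) / n ≤ b - a := by
      rw [div_le_iff₀ hnpos]; nlinarith
    exact ⟨by simp only [hsp]; linarith, by simp only [hsp]; linarith⟩
  have hstep : ∀ i < n, dist (γ (sp i)) (γ (sp (i+1))) < ε := by
    intro i hi
    apply hδ _ (hspmem i hi.le) _ (hspmem (i+1) hi)
    have e : sp i - sp (i+1) = -((b - a) / n) := by
      simp only [hsp]; push_cast; ring
    rw [Real.dist_eq, e, abs_neg, abs_of_nonneg (div_nonneg (by linarith) hnpos.le)]
    rw [div_lt_iff₀ hnpos]
    rw [div_lt_iff₀ hδpos] at hn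
    nlinarith
  have claim : ∀ k, 1 ≤ k → k ≤ n → ∀ h : ℝ → T, IsGeodesicPath h → h 0 = γ a →
      h 1 = γ (sp k) → ∀ q ∈ h '' Icc 0 1,
      ∃ i < k, dist q (γ (sp i)) ≤ dist (γ (sp i)) (γ (sp (i+1))) := by
    intro k
    induction k with
    | zero => intro h1k; exact absurd h1k (by norm_num)
    | succ k ih =>
      intro h1k hkn h hh hh0 hh1 q hq
      by_cases hk0 : k = 0
      · subst hk0
        refine ⟨0, Nat.zero_lt_one, ?_⟩
        obtain ⟨t, ht, rfl⟩ := hq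
        have hsp0 : sp 0 = a := by simp [hsp]
        calc dist (h t) (γ (sp 0)) = dist (h t) (h 0) := by rw [hh0, hsp0]
          _ ≤ dist (h 0) (h 1) := geo_dist_le hh ht
          _ = dist (γ (sp 0)) (γ (sp (0+1))) := by rw [hh0, hh1, hsp0]
      · obtain ⟨h1, hh10, hh11, hh1g⟩ := hT.exists_geodesic (γ a) (γ (sp k))
        obtain ⟨h2, hh20, hh21, hh2g⟩ := hT.exists_geodesic (γ (sp k)) (γ (sp (k+1)))
        have hsub := seg_subset_union hT hh hh1g hh2g (by rw [hh0, hh10])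
          (by rw [hh11, hh20]) (by rw [hh21, hh1])
        rcases hsub hq with hq1 | hq2
        · obtain ⟨i, hik, hd⟩ := ih (by omega) (by omega) h1 hh1g hh10 hh11 q hq1
          exact ⟨i, by omega, hd⟩
        · refine ⟨k, by omega, ?_⟩
          obtain ⟨t, ht, rfl⟩ := hq2
          calc dist (h2 t) (γ (sp k)) = dist (h2 t) (h2 0) := by rw [hh20]
            _ ≤ dist (h2 0) (h2 1) := geo_dist_le hh2g ht
            _ = _ := by rw [hh20, hh21]
  have hn1 : 1 ≤ n := by exact_mod_cast Nat.one_le_iff_ne_zero.2 (by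
    intro h; rw [h] at hnpos; simp at hnpos)
  have hspn : sp n = b := by
    simp only [hsp]
    field_simp
    ring
  obtain ⟨i, hin, hd⟩ := claim n hn1 le_rfl g hg hγa.symm (by rw [hspn, hγb]) p hp
  have hmem : γ (sp i) ∈ K := mem_image_of_mem γ (hspmem i hin.le)
  have h1 : ε ≤ dist p (γ (sp i)) := Metric.infDist_le_dist_of_mem hmem
  have h2 := hstep i hin
  linarith

end Aux

/-- In a metric tree `T`, if `η` is a geodesic and `β` a continuous path with the same
endpoints, then for any 1-Lipschitz map `φ : T → M`,
`length(φ ∘ η) ≤ length(φ ∘ β)`. -/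

theorem stmt6 {T M : Type*} [MetricSpace T] [MetricSpace M] (hT : IsMetricTree T)
    (η β : ℝ → T) (hη : IsGeodesicPath η)
    (hβ : ContinuousOn β (Icc 0 1)) (h0 : β 0 = η 0) (h1 : β 1 = η 1)
    (φ : T → M) (hφ : LipschitzWith 1 φ) :
    pathLen (φ ∘ η) ≤ pathLen (φ ∘ β) := by
  suffices h : ∀ (n : ℕ) (uu : ℕ → ℝ), Monotone uu → (∀ i, uu i ∈ Icc (0:ℝ) 1) →
      ∑ i ∈ Finset.range n, edist ((φ ∘ η) (uu (i+1))) ((φ ∘ η) (uu i))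
        ≤ pathLen (φ ∘ β) by
    exact iSup_le fun p => h p.1 p.2.1 p.2.2.1 p.2.2.2
  intro n uu hu us
  have hβfull : η '' Icc 0 1 ⊆ β '' Icc 0 1 :=
    mem_of_path hT hη zero_le_one hβ h0 h1
  set S : ℕ → Set ℝ := fun i => {s ∈ Icc (0:ℝ) 1 | β s = η (uu i)} with hSdef
  have hScl : ∀ i, IsClosed (S i) := by
    intro i
    have : S i = Icc (0:ℝ) 1 ∩ β ⁻¹' {η (uu i)} := by
      ext s; simp [hSdef]
    rw [this]
    exact hβ.preimage_isClosed_of_isClosed isClosed_Icc isClosed_singleton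
  have hSne : ∀ i, (S i).Nonempty := by
    intro i
    obtain ⟨s, hs, hβs⟩ := hβfull (mem_image_of_mem η (us i))
    exact ⟨s, hs, hβs⟩
  have hSbdd : ∀ i, BddBelow (S i) := fun i => ⟨0, fun s hs => hs.1.1⟩
  set vv : ℕ → ℝ := fun i => sInf (S i) with hvv
  have hvmem : ∀ i, vv i ∈ S i := fun i => (hScl i).csInf_mem (hSne i) (hSbdd i)
  have hvI : ∀ i, vv i ∈ Icc (0:ℝ) 1 := fun i => (hvmem i).1
  have hβv : ∀ i, β (vv i) = η (uu i) := fun i => (hvmem i).2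
  have hvmono : Monotone vv := by
    apply monotone_nat_of_le_succ
    intro i
    obtain ⟨h, hh, hh0, hh1, -, hc⟩ := sub_geodesic hη mem01_0 (us (i+1))
    have key := mem_of_path hT hh (hvI (i+1)).1
      (hβ.mono (Icc_subset_Icc le_rfl (hvI (i+1)).2))
      (by rw [h0, hh0]) (by rw [hβv (i+1), hh1])
    obtain ⟨s, hs, hβs⟩ := key (hc (uu i) (us i).1 (hu (Nat.le_succ i)))
    have hsS : s ∈ S i := ⟨⟨hs.1, hs.2.trans (hvI (i+1)).2⟩, hβs⟩
    exact (csInf_le (hSbdd i) hsS).trans hs.2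
  calc ∑ i ∈ Finset.range n, edist ((φ ∘ η) (uu (i+1))) ((φ ∘ η) (uu i))
      = ∑ i ∈ Finset.range n, edist ((φ ∘ β) (vv (i+1))) ((φ ∘ β) (vv i)) := by
        refine Finset.sum_congr rfl fun i _ => ?_
        simp only [Function.comp_apply, hβv]
    _ ≤ eVariationOn (φ ∘ β) (Icc 0 1) := eVariationOn.sum_le (n := n) hvmono hvI
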